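/- Assume α > 1 and 0 < p, q ≤ 1. Let A be the 6×6 matrix with entries A₁₄ = p/(α+1), A₁₆ = -p/(α+1), A₂₁ = A₃₂ = A₅₄ = A₆₅ = 1, A₄₁ = q/(α+1), A₄₃ = -q/(α+1), and all other entries zero (the Jacobian of the system at the equilibrium (α+1, α+1)). Then every eigenvalue λ of A satisfies |λ| < 1. -/

import Mathlib

set_option maxRecDepth 8000
set_option maxHeartbeats 1000000

private theorem cv5 {β : Type*} (x : β) (u : Fin 5 → β) : Matrix.vecCons x u 5 = u 4 := rfl
private theorem cv4 {β : Type*} (x : β) (u : Fin 4 → β) : Matrix.vecCons x u 4 = u 3 := rfl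

theorem jacobian_eigenvalues_in_unit_disk (α p q : ℝ) (hα : 1 < α) (hp : 0 < p)
    (hp1 : p ≤ 1) (hq : 0 < q) (hq1 : q ≤ 1)
    (A : Matrix (Fin 6) (Fin 6) ℝ)
    (hA : A = Matrix.of
      ![![0, 0, 0, p / (α + 1), 0, -(p / (α + 1))],
        ![1, 0, 0, 0, 0, 0],
        ![0, 1, 0, 0, 0, 0],
        ![q / (α + 1), 0, -(q / (α + 1)), 0, 0, 0],
        ![0, 0, 0, 1, 0, 0],
        ![0, 0, 0, 0, 1, 0]]) :
    ∀ lam : ℂ, lam ∈ spectrum ℂ (A.map (Complex.ofReal)) → ‖lam‖ < 1 := by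
  intro lam hlam
  by_contra hcon
  push_neg at hcon
  have hlam0 : lam ≠ 0 := by
    intro h
    rw [h] at hcon
    simp at hcon
    linarith
  rw [spectrum.mem_iff] at hlam
  have hdet : (algebraMap ℂ (Matrix (Fin 6) (Fin 6) ℂ) lam - A.map Complex.ofReal).det = 0 := by
    by_contra hd
    exact hlam ((Matrix.isUnit_iff_isUnit_det _).mpr (isUnit_iff_ne_zero.mpr hd))
  obtain ⟨v, hv0, hv⟩ := (Matrix.exists_mulVec_eq_zero_iff).mpr hdet
  subst hA
  have e0 := congrFun hv 0
  have e1 := congrFun hv 1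
  have e2 := congrFun hv 2
  have e3 := congrFun hv 3
  have e4 := congrFun hv 4
  have e5 := congrFun hv 5
  simp only [Matrix.sub_mulVec] at e0 e1 e2 e3 e4 e5
  simp [Matrix.mulVec, dotProduct, Fin.sum_univ_six,
    Matrix.algebraMap_matrix_apply, cv5, cv4] at e0 e1 e2 e3 e4 e5
  -- basic consequences
  have h10 : v 0 = lam * v 1 := by linear_combination -e1
  have h21 : v 1 = lam * v 2 := by linear_combination -e2
  have h43 : v 3 = lam * v 4 := by linear_combination -e4
  have h54 : v 4 = lam * v 5 := by linear_combination -e5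
  have h02 : v 0 = lam ^ 2 * v 2 := by rw [h10, h21]; ring
  have h35 : v 3 = lam ^ 2 * v 5 := by rw [h43, h54]; ring
  have k1 : lam ^ 3 * v 2 = (↑p / (↑α + 1)) * (lam ^ 2 - 1) * v 5 := by
    have h := e0
    rw [h02, h35] at h
    linear_combination h
  have k2 : lam ^ 3 * v 5 = (↑q / (↑α + 1)) * (lam ^ 2 - 1) * v 2 := by
    have h := e3
    rw [h02, h35] at h
    linear_combination h
  -- show v 2 ≠ 0 and v 5 ≠ 0
  have hv2 : v 2 ≠ 0 := by
    intro h2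
    have h5 : v 5 = 0 := by
      have h : lam ^ 3 * v 5 = 0 := by rw [k2, h2]; ring
      exact (mul_eq_zero.mp h).resolve_left (pow_ne_zero 3 hlam0)
    apply hv0
    funext i
    fin_cases i <;> simp [h02, h35, h21, h43, h54, h2, h5]
  have hv5 : v 5 ≠ 0 := by
    intro h5
    have h2 : v 2 = 0 := by
      have h : lam ^ 3 * v 2 = 0 := by rw [k1, h5]; ring
      exact (mul_eq_zero.mp h).resolve_left (pow_ne_zero 3 hlam0)
    exact hv2 h2
  have key : lam ^ 6 = ((p / (α + 1) * (q / (α + 1)) : ℝ) : ℂ) * (lam ^ 2 - 1) ^ 2 := by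
    have hm : (lam ^ 3 * v 2) * (lam ^ 3 * v 5)
        = ((↑p / (↑α + 1)) * (lam ^ 2 - 1) * v 5) * ((↑q / (↑α + 1)) * (lam ^ 2 - 1) * v 2) := by
      rw [k1, k2]
    have h : (lam ^ 6 - ((p / (α + 1) * (q / (α + 1)) : ℝ) : ℂ) * (lam ^ 2 - 1) ^ 2) * (v 2 * v 5) = 0 := by
      push_cast
      linear_combination hm
    rcases mul_eq_zero.mp h with h | h
    · linear_combination h
    · exact absurd h (mul_ne_zero hv2 hv5)
  -- pass to absolute values
  set x : ℝ := ‖lam‖ with hx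
  set y : ℝ := ‖lam ^ 2 - 1‖ with hy
  have hα1 : (0:ℝ) < α + 1 := by linarith
  have hPQpos : 0 < p / (α + 1) * (q / (α + 1)) := by positivity
  have h6 : x ^ 6 = (p / (α + 1) * (q / (α + 1))) * y ^ 2 := by
    have h := congrArg (fun z : ℂ => ‖z‖) key
    rwa [norm_pow, norm_mul, norm_pow, Complex.norm_real, Real.norm_eq_abs, abs_of_pos hPQpos] at h
  have hy0 : 0 ≤ y := norm_nonneg _
  have hyx : y ≤ x ^ 2 + 1 := by
    have h := norm_sub_le_norm_sub_add_norm_sub (lam ^ 2) 0 1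
    simpa [norm_pow, ← hx] using h
  have hPQ : p / (α + 1) * (q / (α + 1)) < 1 / 4 := by
    have h4 : (2:ℝ) < α + 1 := by linarith
    have hp' : p / (α + 1) < 1 / 2 := by
      rw [div_lt_div_iff₀ hα1 (by norm_num)]
      nlinarith
    have hq' : q / (α + 1) ≤ 1 / 2 := by
      rw [div_le_div_iff₀ hα1 (by norm_num)]
      nlinarith
    nlinarith [div_pos hq hα1]
  have hstep1 : (p / (α + 1) * (q / (α + 1))) * y ^ 2
      ≤ (p / (α + 1) * (q / (α + 1))) * (x ^ 2 + 1) ^ 2 := by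
    apply mul_le_mul_of_nonneg_left _ (le_of_lt hPQpos)
    nlinarith
  have hstep2 : (p / (α + 1) * (q / (α + 1))) * (x ^ 2 + 1) ^ 2 < (1/4) * (x ^ 2 + 1) ^ 2 := by
    have hxx : (0:ℝ) < (x ^ 2 + 1) ^ 2 := by positivity
    exact mul_lt_mul_of_pos_right hPQ hxx
  have hstep3 : (x ^ 2 + 1) ^ 2 ≤ 4 * x ^ 6 := by nlinarith [hcon, sq_nonneg (x - 1), sq_nonneg (x ^ 2 - 1), sq_nonneg (x ^ 3 - x), sq_nonneg (x ^ 3 - 1), mul_nonneg (sub_nonneg.mpr hcon) (sq_nonneg x)]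
  linarith [h6, hstep1, hstep2, hstep3]
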